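/- arXiv:2207.02664 — 3 statements merged into one kernel-verified Lean document; each statement's English description precedes it below -/
import Mathlib

section
/- Let Γ=(H,σ) be a signed hypergraph with normalized Laplacian L = I - D^{-1}A, where D is the diagonal degree matrix and A the signed adjacency matrix. For any two functions f, g : V → ℝ, one has ⟨fg, L(fg)⟩ = ⟨fg, f·Lg⟩ + Σ_{x,y ∈ e ∈ E} deg(x)(−L_{xy}) g(x)g(y)(f(x)−f(y))², where ⟨u,v⟩ = Σ_{i∈V} deg(i)u(i)v(i) and fg denotes the pointwise product. -/
attribute [local instance] Classical.propDecidable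

open Finset Matrix

/-! ## Signed hypergraphs (edges indexed by a type `E`; `sign v e ∈ {0, 1, -1}`,
nonzero exactly on incidences) -/

structure SignedHypergraph (V E : Type) where
  sign : V → E → ℝ
  sign_values : ∀ v e, sign v e = 0 ∨ sign v e = 1 ∨ sign v e = -1

namespace SignedHypergraph

variable {V E : Type} [Fintype V] [Fintype E] [DecidableEq V] [DecidableEq E]

/-- The vertex set of an edge. -/
noncomputable def edgeVerts (G : SignedHypergraph V E) (e : E) : Finset V :=
  Finset.univ.filter fun v => G.sign v e ≠ 0

/-- The degree of a vertex. -/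
noncomputable def deg (G : SignedHypergraph V E) (v : V) : ℕ :=
  (Finset.univ.filter fun e : E => G.sign v e ≠ 0).card

/-- The sign of an edge: `sgn e = (-1)^(|e|-1) ∏_{v ∈ e} σ(v,e)`. -/
noncomputable def edgeSign (G : SignedHypergraph V E) (e : E) : ℝ :=
  (-1 : ℝ) ^ ((G.edgeVerts e).card - 1) * ∏ v ∈ G.edgeVerts e, G.sign v e

/-- The signed adjacency matrix. -/
noncomputable def adj (G : SignedHypergraph V E) : Matrix V V ℝ :=
  Matrix.of fun x y =>
    if x = y then 0
    else ∑ e ∈ Finset.univ.filter (fun e : E => G.sign x e ≠ 0 ∧ G.sign y e ≠ 0), G.edgeSign e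

/-- The normalized Laplacian `L = I - D⁻¹ A`. -/
noncomputable def lap (G : SignedHypergraph V E) : Matrix V V ℝ :=
  Matrix.of fun x y => (if x = y then (1 : ℝ) else 0) - G.adj x y / (G.deg x : ℝ)

/-- The degree-weighted inner product `⟨f, g⟩ = ∑ v deg(v) f(v) g(v)`. -/
noncomputable def dInner (G : SignedHypergraph V E) (f g : V → ℝ) : ℝ :=
  ∑ v : V, (G.deg v : ℝ) * f v * g v

/-- Two vertices share an edge. -/
def Adjacent (G : SignedHypergraph V E) (x y : V) : Prop :=
  ∃ e : E, G.sign x e ≠ 0 ∧ G.sign y e ≠ 0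

/-- The underlying hypergraph is connected. -/
def Connected (G : SignedHypergraph V E) : Prop :=
  ∀ x y : V, Relation.ReflTransGen G.Adjacent x y

/-- One step of a strong nodal domain path: `x, y` in a common edge `e` with
`f x · sgn e · f y > 0`. -/
def sStep (G : SignedHypergraph V E) (f : V → ℝ) (x y : V) : Prop :=
  ∃ e : E, G.sign x e ≠ 0 ∧ G.sign y e ≠ 0 ∧ 0 < f x * G.edgeSign e * f y

/-- The number `𝔖(f)` of strong nodal domains: equivalence classes of the support of `f`
under joining by S-paths. -/
noncomputable def strongDomainCount (G : SignedHypergraph V E) (f : V → ℝ) : ℕ :=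
  Set.ncard {D : Set V | ∃ w, f w ≠ 0 ∧ D = {x | Relation.ReflTransGen (G.sStep f) w x}}

/-- A weak nodal domain path: a walk along edges such that any two consecutive nonzeros
`v i`, `v j` of `f` (joined through zeros by the edges `e i, …, e (j-1)`) satisfy
`f (v i) · sgn (e i) ⋯ sgn (e (j-1)) · f (v j) > 0`. -/
def IsWPath (G : SignedHypergraph V E) (f : V → ℝ) {ℓ : ℕ}
    (v : Fin (ℓ + 1) → V) (e : Fin ℓ → E) : Prop :=
  (∀ t : Fin ℓ, G.sign (v t.castSucc) (e t) ≠ 0 ∧ G.sign (v t.succ) (e t) ≠ 0) ∧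
  ∀ i j : Fin (ℓ + 1), i < j → f (v i) ≠ 0 → f (v j) ≠ 0 →
    (∀ k : Fin (ℓ + 1), i < k → k < j → f (v k) = 0) →
    0 < f (v i) *
        (∏ t : Fin ℓ, if (i : ℕ) ≤ (t : ℕ) ∧ (t : ℕ) < (j : ℕ) then G.edgeSign (e t) else 1) *
        f (v j)

/-- `x` and `y` are joined by a W-path (or equal). -/
def wRel (G : SignedHypergraph V E) (f : V → ℝ) (x y : V) : Prop :=
  x = y ∨ ∃ (ℓ : ℕ) (v : Fin (ℓ + 1) → V) (e : Fin ℓ → E),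
    G.IsWPath f v e ∧ v 0 = x ∧ v (Fin.last ℓ) = y

/-- The weak nodal domain of a vertex `w` in the support of `f`: the equivalence class
of `w` under the W-path relation on the support, enlarged by the zero vertices
W-path-connected to it. -/
def weakDomain (G : SignedHypergraph V E) (f : V → ℝ) (w : V) : Set V :=
  {x | ∃ y, f y ≠ 0 ∧ G.wRel f w y ∧ G.wRel f x y}

def IsWeakNodalDomain (G : SignedHypergraph V E) (f : V → ℝ) (D : Set V) : Prop :=
  ∃ w, f w ≠ 0 ∧ D = G.weakDomain f w

/-- The number `𝔚(f)` of weak nodal domains. -/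
noncomputable def weakDomainCount (G : SignedHypergraph V E) (f : V → ℝ) : ℕ :=
  Set.ncard {D : Set V | G.IsWeakNodalDomain f D}

/-- The number of connected components of the subhypergraph induced on the vertex set `A`
with edges restricted to those satisfying `P`. -/
noncomputable def componentsOn (G : SignedHypergraph V E) (A : Finset V) (P : E → Prop) : ℕ :=
  Set.ncard {C : Set V | ∃ v ∈ A, C =
    {u | u ∈ A ∧ Relation.ReflTransGen
      (fun x y => x ∈ A ∧ y ∈ A ∧ ∃ e, P e ∧ G.sign x e ≠ 0 ∧ G.sign y e ≠ 0) v u}}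

/-- The cyclomatic number `l = ∑_e (|e|-1) - |V| + c` of the subhypergraph induced on `A`
with edges restricted to those satisfying `P`. -/
noncomputable def cyclomaticOn (G : SignedHypergraph V E) (A : Finset V) (P : E → Prop) : ℤ :=
  (∑ e ∈ Finset.univ.filter (fun e : E => P e ∧ (G.edgeVerts e ∩ A).Nonempty),
      (((G.edgeVerts e ∩ A).card : ℤ) - 1)) -
    (A.card : ℤ) + (G.componentsOn A P : ℤ)

/-- An edge all of whose pairs of (distinct) vertices `x, y` satisfy
`f x · sgn e · f y > 0`. -/
def posEdge (G : SignedHypergraph V E) (f : V → ℝ) (e : E) : Prop :=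
  ∀ x y : V, G.sign x e ≠ 0 → G.sign y e ≠ 0 → x ≠ y → 0 < f x * G.edgeSign e * f y

/-- An edge of the subhypergraph `S` on the support of `f`. -/
def sEdge (G : SignedHypergraph V E) (f : V → ℝ) (e : E) : Prop :=
  (∀ v, G.sign v e ≠ 0 → f v ≠ 0) ∧ G.posEdge f e

/-- The subhypergraph with edge set `P` contains a cycle. -/
def HasCycle (G : SignedHypergraph V E) (P : E → Prop) : Prop :=
  ∃ (q : ℕ) (v : Fin (q + 1) → V) (e : Fin q → E), 2 ≤ q ∧
    Function.Injective (fun t : Fin q => v t.castSucc) ∧ Function.Injective e ∧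
    v (Fin.last q) = v 0 ∧
    ∀ t : Fin q, P (e t) ∧ G.sign (v t.castSucc) (e t) ≠ 0 ∧ G.sign (v t.succ) (e t) ≠ 0

/-- A tree-like vertex: its removal increases the number of connected components
by `deg x - 1`. -/
def Treelike (G : SignedHypergraph V E) (x : V) : Prop :=
  (G.componentsOn (Finset.univ.erase x) (fun _ => True) : ℤ) =
    (G.componentsOn Finset.univ (fun _ => True) : ℤ) + (G.deg x : ℤ) - 1

/-- The Fiedler zero set of `f`: zeros `x` of `f` such that either all vertices sharing an
edge with `x` are zeros, or `x` is not tree-like. -/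
def fiedlerSet (G : SignedHypergraph V E) (f : V → ℝ) : Set V :=
  {x | f x = 0 ∧ ((∀ y, G.Adjacent x y → f y = 0) ∨ ¬ G.Treelike x)}

/-- Weak deletion of the vertices in `R`: each vertex of `R` is removed from every hyperedge
(possibly creating empty edges). -/
def weakDelete (G : SignedHypergraph V E) (R : Finset V) :
    SignedHypergraph {v : V // v ∉ R} E :=
  ⟨fun v e => G.sign v.1 e, fun v e => G.sign_values v.1 e⟩

end SignedHypergraph

/-! ## Plain hypergraphs -/

structure PlainHypergraph (V : Type) where
  verts : Finset V
  edges : Finset (Finset V)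
  edge_subset : ∀ e ∈ edges, e ⊆ verts

namespace PlainHypergraph

variable {V : Type} [DecidableEq V]

def Adjacent (H : PlainHypergraph V) (x y : V) : Prop := ∃ e ∈ H.edges, x ∈ e ∧ y ∈ e

def Connected (H : PlainHypergraph V) : Prop :=
  ∀ x ∈ H.verts, ∀ y ∈ H.verts, Relation.ReflTransGen H.Adjacent x y

/-- A cycle: an alternating closed sequence of distinct vertices and distinct edges
`v 0, e 0, v 1, e 1, …, v q = v 0` of length `q ≥ 2` with `v t, v (t+1) ∈ e t`. -/
def IsCycle (H : PlainHypergraph V) {q : ℕ} (v : Fin (q + 1) → V) (e : Fin q → Finset V) : Prop :=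
  2 ≤ q ∧ Function.Injective (fun t : Fin q => v t.castSucc) ∧ Function.Injective e ∧
    v (Fin.last q) = v 0 ∧
    ∀ t : Fin q, e t ∈ H.edges ∧ v t.castSucc ∈ e t ∧ v t.succ ∈ e t

def Acyclic (H : PlainHypergraph V) : Prop :=
  ¬ ∃ (q : ℕ) (v : Fin (q + 1) → V) (e : Fin q → Finset V), H.IsCycle v e

/-- The number of connected components. -/
noncomputable def ncomp (H : PlainHypergraph V) : ℕ :=
  Set.ncard {C : Set V | ∃ v ∈ H.verts, C = {u | Relation.ReflTransGen H.Adjacent v u}}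

/-- The cyclomatic number `l(H) = ∑_e (|e|-1) - |V| + c(H)`. -/
noncomputable def cyclomatic (H : PlainHypergraph V) : ℤ :=
  (∑ e ∈ H.edges, ((e.card : ℤ) - 1)) - (H.verts.card : ℤ) + (H.ncomp : ℤ)

def degree (H : PlainHypergraph V) (x : V) : ℕ := (H.edges.filter fun e => x ∈ e).card

/-- The subhypergraph induced by a vertex set `A`: edges `e ∩ A` for `e ∩ A ≠ ∅`. -/
def induced (H : PlainHypergraph V) (A : Finset V) : PlainHypergraph V where
  verts := H.verts ∩ A
  edges := (H.edges.filter fun e => (e ∩ A).Nonempty).image fun e => e ∩ A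
  edge_subset := by
    intro e' he'
    simp only [Finset.mem_image, Finset.mem_filter] at he'
    obtain ⟨e, ⟨heE, -⟩, rfl⟩ := he'
    intro x hx
    rcases Finset.mem_inter.mp hx with ⟨hxe, hxA⟩
    exact Finset.mem_inter.mpr ⟨H.edge_subset e heE hxe, hxA⟩

/-- A tree-like vertex: deleting it (induced subhypergraph on the remaining vertices)
increases the number of connected components by `deg x - 1`. -/
def Treelike (H : PlainHypergraph V) (x : V) : Prop :=
  ((H.induced (H.verts.erase x)).ncomp : ℤ) = (H.ncomp : ℤ) + (H.degree x : ℤ) - 1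

/-- Removal of a vertex together with all edges incident to it. -/
def deleteVert (H : PlainHypergraph V) (y : V) : PlainHypergraph V where
  verts := H.verts.erase y
  edges := H.edges.filter fun e => y ∉ e
  edge_subset := by
    intro e he
    rcases Finset.mem_filter.mp he with ⟨heE, hy⟩
    intro x hx
    exact Finset.mem_erase.mpr ⟨fun h => hy (h ▸ hx), H.edge_subset e heE hx⟩

/-- A spanning hyperforest of `H`: a maximal acyclic spanning subhypergraph. -/
def IsSpanningHyperforest (H T : PlainHypergraph V) : Prop :=
  T.verts = H.verts ∧ T.edges ⊆ H.edges ∧ T.Acyclic ∧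
    ∀ T' : PlainHypergraph V, T'.verts = H.verts → T'.edges ⊆ H.edges → T'.Acyclic →
      T.edges ⊆ T'.edges → T'.edges = T.edges

end PlainHypergraph

/-- The positive index of inertia of a real matrix: the number of positive roots of its
characteristic polynomial, counted with multiplicity. -/
noncomputable def posInertia {m : Type} [Fintype m] [DecidableEq m] (M : Matrix m m ℝ) : ℕ :=
  (M.charpoly.roots.filter fun x => 0 < x).card

/-- The bordered matrix `[[B, a], [aᵀ, b]]`. -/
def borderMatrix {n : ℕ} (B : Matrix (Fin n) (Fin n) ℝ) (a : Fin n → ℝ) (b : ℝ) :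
    Matrix (Fin n ⊕ Unit) (Fin n ⊕ Unit) ℝ :=
  Matrix.fromBlocks B (Matrix.of fun i _ => a i) (Matrix.of fun _ j => a j)
    (Matrix.of fun _ _ => b)

variable {V E : Type} [Fintype V] [Fintype E] [DecidableEq V] [DecidableEq E]

lemma aux_adj_symm (G : SignedHypergraph V E) (x y : V) : G.adj x y = G.adj y x := by
  unfold SignedHypergraph.adj
  by_cases h : x = y
  · simp [h]
  · simp only [Matrix.of_apply, if_neg h, if_neg (Ne.symm h)]
    apply Finset.sum_congr _ (fun _ _ => rfl)
    apply Finset.filter_congr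
    intro e _
    tauto

lemma aux_adj_zero (G : SignedHypergraph V E) (x y : V) (h : G.deg x = 0) :
    G.adj x y = 0 := by
  have hz : ∀ e : E, G.sign x e = 0 := by
    intro e
    by_contra he
    have : e ∈ Finset.univ.filter fun e : E => G.sign x e ≠ 0 := by
      simp [he]
    rw [Finset.card_eq_zero.mp h] at this
    exact absurd this (Finset.notMem_empty e)
  unfold SignedHypergraph.adj
  by_cases hxy : x = y
  · simp [hxy]
  · simp only [Matrix.of_apply, if_neg hxy]
    apply Finset.sum_eq_zero
    intro e he
    rw [Finset.mem_filter] at he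
    exact absurd (hz e) he.2.1

lemma aux_m_symm (G : SignedHypergraph V E) (x y : V) :
    (G.deg x : ℝ) * G.lap x y = (G.deg y : ℝ) * G.lap y x := by
  by_cases h : x = y
  · subst h; rfl
  · unfold SignedHypergraph.lap
    simp only [Matrix.of_apply, if_neg h, if_neg (Ne.symm h)]
    by_cases hx : G.deg x = 0
    · rw [aux_adj_zero G x y hx, aux_adj_symm G y x, aux_adj_zero G x y hx]
      simp [hx]
    · by_cases hy : G.deg y = 0
      · rw [aux_adj_zero G y x hy, aux_adj_symm G x y, aux_adj_zero G y x hy]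
        simp [hy]
      · have hx' : (G.deg x : ℝ) ≠ 0 := Nat.cast_ne_zero.mpr hx
        have hy' : (G.deg y : ℝ) ≠ 0 := Nat.cast_ne_zero.mpr hy
        field_simp
        rw [aux_adj_symm G x y]
        ring

theorem stmt0 (G : SignedHypergraph V E) (f g : V → ℝ) :
    G.dInner (fun v => f v * g v) (G.lap.mulVec fun v => f v * g v) =
      G.dInner (fun v => f v * g v) (fun v => f v * G.lap.mulVec g v) +
        (1 / 2) * ∑ x : V, ∑ y : V,
          (G.deg x : ℝ) * (-(G.lap x y)) * g x * g y * (f x - f y) ^ 2 := by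
  set F : V → V → ℝ := fun x y =>
    (G.deg x : ℝ) * (f x * g x) * (G.lap x y * (f y * g y)) -
      ((G.deg x : ℝ) * (f x * g x) * (f x * (G.lap x y * g y)) +
        (1 / 2) * ((G.deg x : ℝ) * (-(G.lap x y)) * g x * g y * (f x - f y) ^ 2)) with hF
  have hanti : ∀ x y : V, F x y + F y x = 0 := by
    intro x y
    have hm := aux_m_symm G x y
    simp only [hF]
    linear_combination (g x * g y * (f y ^ 2 - f x ^ 2) / 2) * hm
  have hsum : ∑ x : V, ∑ y : V, F x y = 0 := by
    have h1 : (∑ x : V, ∑ y : V, F x y) = ∑ x : V, ∑ y : V, F y x :=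
      Finset.sum_comm
    have h2 : (∑ x : V, ∑ y : V, F x y) + (∑ x : V, ∑ y : V, F x y) = 0 := by
      nth_rewrite 2 [h1]
      rw [← Finset.sum_add_distrib]
      simp only [← Finset.sum_add_distrib]
      exact Finset.sum_eq_zero fun x _ => Finset.sum_eq_zero fun y _ => hanti x y
    linarith
  rw [← sub_eq_zero]
  rw [← hsum]
  simp only [SignedHypergraph.dInner, Matrix.mulVec, dotProduct, hF, Finset.mul_sum,
    ← Finset.sum_add_distrib, ← Finset.sum_sub_distrib]
end

section
/- Let L be the normalized Laplacian of a signed hypergraph, let g be an eigenfunction of L with Lg = λg, and let D(g) be the diagonal matrix with D(g)_{xx} = g(x). Then for any function f : V → ℝ, ⟨f, D(g)(L − λI)D(g)f⟩ = Σ_{x,y ∈ e ∈ E} deg(x)(−L_{xy}) g(x)g(y)(f(x)−f(y))², where ⟨·,·⟩ is the degree-weighted inner product. -/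
attribute [local instance] Classical.propDecidable

open Finset Matrix

variable {V E : Type} [Fintype V] [Fintype E] [DecidableEq V] [DecidableEq E]

theorem stmt1 (G : SignedHypergraph V E) (lam : ℝ) (g : V → ℝ) (hg : g ≠ 0)
    (hge : G.lap.mulVec g = lam • g) (f : V → ℝ) :
    G.dInner f
        ((Matrix.diagonal g * (G.lap - lam • (1 : Matrix V V ℝ)) * Matrix.diagonal g).mulVec f) =
      (1 / 2) * ∑ x : V, ∑ y : V,
        (G.deg x : ℝ) * (-(G.lap x y)) * g x * g y * (f x - f y) ^ 2 := by
  classical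
  set B : V → V → ℝ :=
    fun x y => (G.deg x : ℝ) * (G.lap x y - (if x = y then lam else 0)) * (g x * g y) with hB
  have hrow : ∀ x, ∑ y, B x y = 0 := by
    intro x
    have h := congrFun hge x
    simp only [Matrix.mulVec, dotProduct, Pi.smul_apply, smul_eq_mul] at h
    have h1 : ∑ y, B x y = (G.deg x : ℝ) * g x * (∑ y, G.lap x y * g y)
        - (G.deg x : ℝ) * g x * (∑ y, (if x = y then lam * g y else 0)) := by
      rw [Finset.mul_sum, Finset.mul_sum, ← Finset.sum_sub_distrib]
      refine Finset.sum_congr rfl fun y _ => ?_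
      by_cases hxy : x = y <;> simp only [hB, hxy, if_pos, if_neg, ite_true, ite_false] <;> ring
    rw [h1, h, Finset.sum_ite_eq]
    simp
  have hAsymm : ∀ x y, G.adj x y = G.adj y x := by
    intro x y
    by_cases hxy : x = y
    · rw [hxy]
    · simp only [SignedHypergraph.adj, Matrix.of_apply, if_neg hxy, if_neg (Ne.symm hxy)]
      apply Finset.sum_congr _ fun _ _ => rfl
      ext e; simp [and_comm]
  have hA0 : ∀ x y, (G.deg x : ℝ) = 0 → G.adj x y = 0 := by
    intro x y h
    have hd : (Finset.univ.filter fun e : E => G.sign x e ≠ 0) = ∅ :=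
      Finset.card_eq_zero.mp (by exact_mod_cast h)
    have hs : ∀ e : E, G.sign x e = 0 := by
      intro e
      by_contra he
      have : e ∈ (Finset.univ.filter fun e : E => G.sign x e ≠ 0) := by simp [he]
      simp [hd] at this
    by_cases hxy : x = y
    · simp [SignedHypergraph.adj, hxy]
    · simp only [SignedHypergraph.adj, Matrix.of_apply, if_neg hxy]
      apply Finset.sum_eq_zero
      intro e he
      simp only [Finset.mem_filter] at he
      exact absurd (hs e) he.2.1
  have hDL : ∀ x y, x ≠ y → (G.deg x : ℝ) * G.lap x y = -(G.adj x y) := by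
    intro x y hxy
    simp only [SignedHypergraph.lap, Matrix.of_apply, if_neg hxy]
    by_cases hd : (G.deg x : ℝ) = 0
    · rw [hd, hA0 x y hd]; ring
    · field_simp
      ring
  have hsym : ∀ x y, B x y = B y x := by
    intro x y
    by_cases hxy : x = y
    · rw [hxy]
    · have h1 := hDL x y hxy
      have h2 := hDL y x (Ne.symm hxy)
      simp only [hB, if_neg hxy, if_neg (Ne.symm hxy), sub_zero]
      rw [h1, h2, hAsymm x y, mul_comm (g x)]
  have hM : ∀ x y, (Matrix.diagonal g * (G.lap - lam • (1 : Matrix V V ℝ)) * Matrix.diagonal g) x y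
      = g x * (G.lap x y - (if x = y then lam else 0)) * g y := by
    intro x y
    rw [Matrix.mul_diagonal, Matrix.diagonal_mul, Matrix.sub_apply, Matrix.smul_apply,
      Matrix.one_apply, smul_eq_mul]
    by_cases hxy : x = y <;> simp [hxy]
  have hLHS : G.dInner f
      ((Matrix.diagonal g * (G.lap - lam • (1 : Matrix V V ℝ)) * Matrix.diagonal g).mulVec f)
      = ∑ x, ∑ y, B x y * (f x * f y) := by
    simp only [SignedHypergraph.dInner, Matrix.mulVec, dotProduct]
    refine Finset.sum_congr rfl fun x _ => ?_
    rw [Finset.mul_sum]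
    refine Finset.sum_congr rfl fun y _ => ?_
    rw [hM]
    simp only [hB]
    ring
  have hRHS : ∑ x : V, ∑ y : V,
      (G.deg x : ℝ) * (-(G.lap x y)) * g x * g y * (f x - f y) ^ 2
      = ∑ x, ∑ y, (-(B x y)) * (f x - f y) ^ 2 := by
    refine Finset.sum_congr rfl fun x _ => Finset.sum_congr rfl fun y _ => ?_
    by_cases hxy : x = y
    · simp [hxy]
    · simp only [hB, if_neg hxy, sub_zero]; ring
  have t1 : ∑ x, ∑ y, B x y * f x ^ 2 = 0 := by
    refine Finset.sum_eq_zero fun x _ => ?_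
    rw [← Finset.sum_mul, hrow x, zero_mul]
  have t3 : ∑ x, ∑ y, B x y * f y ^ 2 = 0 := by
    rw [Finset.sum_comm]
    refine Finset.sum_eq_zero fun y _ => ?_
    rw [← Finset.sum_mul]
    have : ∑ x, B x y = 0 := by
      rw [Finset.sum_congr rfl fun x _ => hsym x y, hrow y]
    rw [this, zero_mul]
  have key : ∑ x, ∑ y, (-(B x y)) * (f x - f y) ^ 2
      = 2 * ∑ x, ∑ y, B x y * (f x * f y) := by
    have e1 : ∀ x y : V, (-(B x y)) * (f x - f y) ^ 2
        = 2 * (B x y * (f x * f y)) - B x y * f x ^ 2 - B x y * f y ^ 2 := by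
      intro x y; ring
    calc ∑ x, ∑ y, (-(B x y)) * (f x - f y) ^ 2
        = ∑ x, ∑ y, (2 * (B x y * (f x * f y)) - B x y * f x ^ 2 - B x y * f y ^ 2) :=
          Finset.sum_congr rfl fun x _ => Finset.sum_congr rfl fun y _ => e1 x y
      _ = (∑ x, ∑ y, 2 * (B x y * (f x * f y))) - (∑ x, ∑ y, B x y * f x ^ 2)
            - (∑ x, ∑ y, B x y * f y ^ 2) := by
          simp only [Finset.sum_sub_distrib]
      _ = 2 * ∑ x, ∑ y, B x y * (f x * f y) := by
          rw [t1, t3]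
          simp [Finset.mul_sum]
  rw [hLHS, hRHS, key]
  ring
end

section
/- Let f be a nonzero function on a signed hypergraph Γ=(H,σ). Then any three pairwise distinct weak nodal domains D_1, D_2, D_3 of f satisfy D_1 ∩ D_2 ∩ D_3 = ∅. -/
attribute [local instance] Classical.propDecidable

open Finset Matrix

namespace SignedHypergraph

variable {V E : Type} [Fintype V] [Fintype E] [DecidableEq V] [DecidableEq E]

/-! ### auxiliary -/
set_option linter.unusedSectionVars false

lemma edgeSign_ne_zero (G : SignedHypergraph V E) (e : E) : G.edgeSign e ≠ 0 := by
  unfold edgeSign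
  apply mul_ne_zero (pow_ne_zero _ (by norm_num))
  exact Finset.prod_ne_zero_iff.mpr fun v hv => (Finset.mem_filter.mp hv).2

def NPath (G : SignedHypergraph V E) (f : V → ℝ) (ℓ : ℕ) (v : ℕ → V) (e : ℕ → E) : Prop :=
  (∀ t, t < ℓ → G.sign (v t) (e t) ≠ 0 ∧ G.sign (v (t + 1)) (e t) ≠ 0) ∧
  ∀ i j, i < j → j ≤ ℓ → f (v i) ≠ 0 → f (v j) ≠ 0 →
    (∀ k, i < k → k < j → f (v k) = 0) →
    0 < f (v i) * (∏ t ∈ Finset.Ico i j, G.edgeSign (e t)) * f (v j)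

lemma prod_if_Ico {ℓ i j : ℕ} (hj : j ≤ ℓ) (s : ℕ → ℝ) (g : Fin ℓ → ℝ)
    (hg : ∀ t : Fin ℓ, g t = s t) :
    (∏ t : Fin ℓ, if i ≤ (t : ℕ) ∧ (t : ℕ) < j then g t else 1)
      = ∏ t ∈ Finset.Ico i j, s t := by
  have h1 : (∏ t : Fin ℓ, if i ≤ (t : ℕ) ∧ (t : ℕ) < j then g t else 1)
      = ∏ t : Fin ℓ, (fun n : ℕ => if i ≤ n ∧ n < j then s n else 1) (t : ℕ) := by
    apply Finset.prod_congr rfl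
    intro t _
    simp only [hg]
  have h2 := Fin.prod_univ_eq_prod_range (fun n : ℕ => if i ≤ n ∧ n < j then s n else 1) ℓ
  rw [h1, h2, ← Finset.prod_filter]
  apply Finset.prod_congr _ (fun _ _ => rfl)
  ext t
  simp only [Finset.mem_filter, Finset.mem_range, Finset.mem_Ico]
  omega

lemma wRel_of_npath {G : SignedHypergraph V E} {f : V → ℝ} {ℓ : ℕ} {v : ℕ → V} {e : ℕ → E}
    (h : NPath G f ℓ v e) : G.wRel f (v 0) (v ℓ) := by
  refine Or.inr ⟨ℓ, fun t => v t, fun t => e t, ⟨fun t => h.1 t t.isLt, ?_⟩, rfl, by simp⟩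
  intro i j hij hfi hfj hz
  rw [prod_if_Ico (Nat.lt_succ_iff.mp j.isLt) (fun t => G.edgeSign (e t))
    (fun t : Fin ℓ => G.edgeSign (e t)) (fun t => rfl)]
  refine h.2 i j hij (Nat.lt_succ_iff.mp j.isLt) hfi hfj fun k hik hkj => ?_
  have hk : k < ℓ + 1 := by omega
  have := hz ⟨k, hk⟩ (by simpa [Fin.lt_def]) (by simpa [Fin.lt_def])
  simpa using this

lemma npath_of_wRel {G : SignedHypergraph V E} {f : V → ℝ} {x y : V}
    (h : G.wRel f x y) (hxy : x ≠ y) :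
    ∃ (ℓ : ℕ) (v : ℕ → V) (e : ℕ → E), 1 ≤ ℓ ∧ NPath G f ℓ v e ∧ v 0 = x ∧ v ℓ = y := by
  rcases h with h | ⟨ℓ, v, e, ⟨hinc, hsgn⟩, hv0, hvl⟩
  · exact absurd h hxy
  have hl : 1 ≤ ℓ := by
    rcases Nat.eq_zero_or_pos ℓ with rfl | h
    · refine absurd ?_ hxy
      rw [← hv0, ← hvl]
      rfl
    · exact h
  obtain ⟨vN, hvN⟩ : ∃ vN : ℕ → V, ∀ m, vN m = v ⟨min m ℓ, by omega⟩ := ⟨_, fun _ => rfl⟩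
  obtain ⟨eN, heN⟩ : ∃ eN : ℕ → E, ∀ m, eN m = e ⟨min m (ℓ - 1), by omega⟩ := ⟨_, fun _ => rfl⟩
  have hvN' : ∀ m (hm : m ≤ ℓ), vN m = v ⟨m, by omega⟩ := by
    intro m hm
    rw [hvN]
    congr 1
    simp only [Fin.mk.injEq]
    omega
  have heN' : ∀ m (hm : m < ℓ), eN m = e ⟨m, hm⟩ := by
    intro m hm
    rw [heN]
    congr 1
    simp only [Fin.mk.injEq]
    omega
  refine ⟨ℓ, vN, eN, hl, ⟨?_, ?_⟩, ?_, ?_⟩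
  · intro t ht
    rw [hvN' t (by omega), hvN' (t + 1) (by omega), heN' t ht]
    exact hinc ⟨t, ht⟩
  · intro i j hij hjl hfi hfj hz
    rw [hvN' i (by omega)] at hfi
    rw [hvN' j hjl] at hfj
    have key := hsgn ⟨i, by omega⟩ ⟨j, by omega⟩ (by simp only [Fin.mk_lt_mk]; omega)
      hfi hfj ?_
    · have hprod := prod_if_Ico (i := i) (j := j) hjl
        (fun t => G.edgeSign (eN t))
        (fun t : Fin ℓ => G.edgeSign (e t))
        (fun t => by
          show G.edgeSign (e t) = G.edgeSign (eN t.val)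
          rw [heN' t.val t.isLt])
      rw [hprod] at key
      rw [hvN' i (by omega), hvN' j hjl]
      exact key
    · intro k hik hkj
      have hk := hz (k : ℕ) (by simpa [Fin.lt_def] using hik) (by simpa [Fin.lt_def] using hkj)
      rw [hvN' k (by omega)] at hk
      convert hk using 3
  · rw [hvN' 0 (by omega), ← hv0]
    exact congrArg v (Fin.ext (by simp))
  · rw [hvN' ℓ le_rfl, ← hvl]
    exact congrArg v (Fin.ext (by simp [Fin.last]))


lemma npath_reverse {G : SignedHypergraph V E} {f : V → ℝ} {ℓ : ℕ} {v : ℕ → V} {e : ℕ → E}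
    (h : NPath G f ℓ v e) :
    NPath G f ℓ (fun n => v (ℓ - n)) (fun n => e (ℓ - 1 - n)) := by
  obtain ⟨hinc, hsgn⟩ := h
  constructor
  · intro t ht
    have h1 := hinc (ℓ - 1 - t) (by omega)
    have e1 : ℓ - t = ℓ - 1 - t + 1 := by omega
    have e2 : ℓ - (t + 1) = ℓ - 1 - t := by omega
    refine ⟨?_, ?_⟩
    · show G.sign (v (ℓ - t)) (e (ℓ - 1 - t)) ≠ 0
      rw [e1]
      exact h1.2
    · show G.sign (v (ℓ - (t + 1))) (e (ℓ - 1 - t)) ≠ 0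
      rw [e2]
      exact h1.1
  · intro i j hij hjl hfi hfj hz
    have hl : 1 ≤ ℓ := by omega
    have key := hsgn (ℓ - j) (ℓ - i) (by omega) (by omega) hfj hfi ?_
    · have hprod : (∏ t ∈ Finset.Ico i j, G.edgeSign ((fun n => e (ℓ - 1 - n)) t))
          = ∏ t ∈ Finset.Ico (ℓ - j) (ℓ - i), G.edgeSign (e t) := by
        have h5 := Finset.prod_Ico_reflect (fun t => G.edgeSign (e t)) i (m := j) (n := ℓ - 1)
          (by omega)
        rw [show ℓ - 1 + 1 = ℓ from by omega] at h5
        exact h5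
      rw [hprod]
      have : f (v (ℓ - j)) * (∏ t ∈ Finset.Ico (ℓ - j) (ℓ - i), G.edgeSign (e t)) * f (v (ℓ - i))
          = f (v (ℓ - i)) * (∏ t ∈ Finset.Ico (ℓ - j) (ℓ - i), G.edgeSign (e t)) * f (v (ℓ - j)) := by
        ring
      linarith [key]
    · intro k hik hkj
      have := hz (ℓ - k) (by omega) (by omega)
      show f (v k) = 0
      rw [show k = ℓ - (ℓ - k) from by omega]
      exact this


lemma npath_concat {G : SignedHypergraph V E} {f : V → ℝ} {ℓ ℓ' : ℕ} {v v' : ℕ → V}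
    {e e' : ℕ → E} (h1 : NPath G f ℓ v e) (h2 : NPath G f ℓ' v' e') (hj : v ℓ = v' 0)
    (hs : ∀ i j, i ≤ ℓ → j ≤ ℓ' → f (v i) ≠ 0 → f (v' j) ≠ 0 →
      (∀ k, i < k → k ≤ ℓ → f (v k) = 0) → (∀ k, k < j → f (v' k) = 0) →
      0 < f (v i) * ((∏ t ∈ Finset.Ico i ℓ, G.edgeSign (e t)) *
          ∏ t ∈ Finset.Ico 0 j, G.edgeSign (e' t)) * f (v' j)) :
    ∃ (vb : ℕ → V) (eb : ℕ → E),
      NPath G f (ℓ + ℓ') vb eb ∧ vb 0 = v 0 ∧ vb (ℓ + ℓ') = v' ℓ' := by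
  obtain ⟨vb, hvb⟩ : ∃ vb : ℕ → V, ∀ n, vb n = if n ≤ ℓ then v n else v' (n - ℓ) :=
    ⟨_, fun _ => rfl⟩
  obtain ⟨eb, heb⟩ : ∃ eb : ℕ → E, ∀ n, eb n = if n < ℓ then e n else e' (n - ℓ) :=
    ⟨_, fun _ => rfl⟩
  have hb1 : ∀ n, n ≤ ℓ → vb n = v n := fun n hn => by rw [hvb, if_pos hn]
  have hb2 : ∀ n, ℓ ≤ n → vb n = v' (n - ℓ) := by
    intro n hn
    rcases eq_or_lt_of_le hn with rfl | hlt
    · rw [hvb, if_pos le_rfl, hj]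
      congr 1
      omega
    · rw [hvb, if_neg (by omega)]
  have he1 : ∀ n, n < ℓ → eb n = e n := fun n hn => by rw [heb, if_pos hn]
  have he2 : ∀ n, ℓ ≤ n → eb n = e' (n - ℓ) := fun n hn => by rw [heb, if_neg (by omega)]
  refine ⟨vb, eb, ⟨?_, ?_⟩, hb1 0 (by omega), by rw [hb2 (ℓ + ℓ') (by omega)]; congr 1; omega⟩
  · intro t ht
    rcases lt_or_ge t ℓ with h | h
    · rw [he1 t h, hb1 t (le_of_lt h), hb1 (t + 1) (by omega)]
      exact h1.1 t h
    · rw [he2 t h, hb2 t h, hb2 (t + 1) (by omega), show t + 1 - ℓ = (t - ℓ) + 1 from by omega]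
      exact h2.1 (t - ℓ) (by omega)
  · intro i j hij hjl hfi hfj hz
    rcases le_or_gt j ℓ with hcase | hcase
    · -- entirely within the first path
      rw [hb1 i (by omega)] at hfi
      rw [hb1 j hcase] at hfj
      have hzz : ∀ k, i < k → k < j → f (v k) = 0 := fun k hk1 hk2 => by
        have := hz k hk1 hk2
        rwa [hb1 k (by omega)] at this
      have hp : ∏ t ∈ Finset.Ico i j, G.edgeSign (eb t)
          = ∏ t ∈ Finset.Ico i j, G.edgeSign (e t) :=
        Finset.prod_congr rfl fun t ht => by
          rw [he1 t (by have := Finset.mem_Ico.mp ht; omega)]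
      rw [hb1 i (by omega), hb1 j hcase, hp]
      exact h1.2 i j hij hcase hfi hfj hzz
    rcases le_or_gt ℓ i with hcase' | hcase'
    · -- entirely within the second path
      rw [hb2 i hcase'] at hfi
      rw [hb2 j (by omega)] at hfj
      have hzz : ∀ m, i - ℓ < m → m < j - ℓ → f (v' m) = 0 := fun m hm1 hm2 => by
        have := hz (ℓ + m) (by omega) (by omega)
        rwa [hb2 (ℓ + m) (by omega), show ℓ + m - ℓ = m from by omega] at this
      have hp : ∏ t ∈ Finset.Ico i j, G.edgeSign (eb t)
          = ∏ t ∈ Finset.Ico (i - ℓ) (j - ℓ), G.edgeSign (e' t) := by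
        have s1 : ∏ t ∈ Finset.Ico i j, G.edgeSign (eb t)
            = ∏ t ∈ Finset.Ico i j, (fun m => G.edgeSign (e' m)) (t - ℓ) :=
          Finset.prod_congr rfl fun t ht => by
            rw [he2 t (by have := Finset.mem_Ico.mp ht; omega)]
        rw [s1, Finset.prod_Ico_eq_prod_range,
          Finset.prod_Ico_eq_prod_range (fun m => G.edgeSign (e' m)) (i - ℓ) (j - ℓ),
          show j - ℓ - (i - ℓ) = j - i from by omega]
        exact Finset.prod_congr rfl fun m _ => by show _ = G.edgeSign (e' (i - ℓ + m)); congr 2; omega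
      rw [hb2 i hcase', hb2 j (by omega), hp]
      exact h2.2 (i - ℓ) (j - ℓ) (by omega) (by omega) hfi hfj hzz
    · -- straddling: i < ℓ < j
      rw [hb1 i (by omega)] at hfi
      rw [hb2 j (by omega)] at hfj
      have htrail : ∀ k, i < k → k ≤ ℓ → f (v k) = 0 := fun k hk1 hk2 => by
        have := hz k hk1 (by omega)
        rwa [hb1 k hk2] at this
      have hlead : ∀ k, k < j - ℓ → f (v' k) = 0 := by
        intro k hk
        rcases Nat.eq_zero_or_pos k with rfl | hkpos
        · rw [← hj]
          have := hz ℓ (by omega) (by omega)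
          rwa [hb1 ℓ le_rfl] at this
        · have := hz (ℓ + k) (by omega) (by omega)
          rwa [hb2 (ℓ + k) (by omega), show ℓ + k - ℓ = k from by omega] at this
      have key := hs i (j - ℓ) (by omega) (by omega) hfi hfj htrail hlead
      have hp : ∏ t ∈ Finset.Ico i j, G.edgeSign (eb t)
          = (∏ t ∈ Finset.Ico i ℓ, G.edgeSign (e t)) *
            ∏ t ∈ Finset.Ico 0 (j - ℓ), G.edgeSign (e' t) := by
        rw [← Finset.prod_Ico_consecutive (fun t => G.edgeSign (eb t)) (le_of_lt hcase')
          (le_of_lt hcase)]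
        congr 1
        · exact Finset.prod_congr rfl fun t ht => by
            rw [he1 t (by have := Finset.mem_Ico.mp ht; omega)]
        · have s1 : ∏ t ∈ Finset.Ico ℓ j, G.edgeSign (eb t)
              = ∏ t ∈ Finset.Ico ℓ j, (fun m => G.edgeSign (e' m)) (t - ℓ) :=
            Finset.prod_congr rfl fun t ht => by
              rw [he2 t (by have := Finset.mem_Ico.mp ht; omega)]
          rw [s1, Finset.prod_Ico_eq_prod_range,
            Finset.prod_Ico_eq_prod_range (fun m => G.edgeSign (e' m)) 0 (j - ℓ),
            show j - ℓ - 0 = j - ℓ from by omega]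
          exact Finset.prod_congr rfl fun m _ => by
            show _ = G.edgeSign (e' (0 + m)); congr 2; omega
      rw [hb1 i (by omega), hb2 j (by omega), hp]
      exact key


lemma wRel_refl {G : SignedHypergraph V E} {f : V → ℝ} (x : V) : G.wRel f x x := Or.inl rfl

lemma wrel_symm {G : SignedHypergraph V E} {f : V → ℝ} {x y : V} (h : G.wRel f x y) :
    G.wRel f y x := by
  by_cases hxy : x = y
  · exact Or.inl hxy.symm
  obtain ⟨ℓ, v, e, hl, hp, hv0, hvl⟩ := npath_of_wRel h hxy
  have := wRel_of_npath (npath_reverse hp)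
  simp only [Nat.sub_zero, Nat.sub_self] at this
  rwa [hvl, hv0] at this

lemma wrel_trans {G : SignedHypergraph V E} {f : V → ℝ} {a b c : V} (hb : f b ≠ 0)
    (hab : G.wRel f a b) (hbc : G.wRel f b c) : G.wRel f a c := by
  by_cases h1 : a = b
  · rwa [h1]
  by_cases h2 : b = c
  · rwa [← h2]
  obtain ⟨ℓ, v, e, hl, hp, hv0, hvl⟩ := npath_of_wRel hab h1
  obtain ⟨ℓ', v', e', hl', hp', hv0', hvl'⟩ := npath_of_wRel hbc h2
  have hj : v ℓ = v' 0 := by rw [hvl, hv0']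
  have hs : ∀ i j, i ≤ ℓ → j ≤ ℓ' → f (v i) ≠ 0 → f (v' j) ≠ 0 →
      (∀ k, i < k → k ≤ ℓ → f (v k) = 0) → (∀ k, k < j → f (v' k) = 0) →
      0 < f (v i) * ((∏ t ∈ Finset.Ico i ℓ, G.edgeSign (e t)) *
          ∏ t ∈ Finset.Ico 0 j, G.edgeSign (e' t)) * f (v' j) := by
    intro i j hi hj' hfi hfj htrail hlead
    have hiℓ : i = ℓ := by
      by_contra hne
      exact hb (hvl ▸ htrail ℓ (by omega) le_rfl)
    have hj0 : j = 0 := by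
      by_contra hne
      exact hb (by rw [← hv0']; exact hlead 0 (by omega))
    subst hiℓ hj0
    simp only [Finset.Ico_self, Finset.prod_empty, mul_one, one_mul]
    rw [hvl, hv0']
    have : (0 : ℝ) < f b * f b := by
      rcases hb.lt_or_gt with h | h
      · nlinarith
      · nlinarith
    rw [hvl] at *
    nlinarith [this]
  obtain ⟨vb, eb, hpb, hb0, hbl⟩ := npath_concat hp hp' hj hs
  have := wRel_of_npath hpb
  rwa [hb0, hbl, hv0, hvl'] at this

lemma weakDomain_eq {G : SignedHypergraph V E} {f : V → ℝ} {a b : V} (ha : f a ≠ 0)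
    (hb : f b ≠ 0) (hab : G.wRel f a b) : G.weakDomain f a = G.weakDomain f b := by
  ext x
  constructor
  · rintro ⟨u, hu, hau, hxu⟩
    exact ⟨u, hu, wrel_trans ha (wrel_symm hab) hau, hxu⟩
  · rintro ⟨u, hu, hbu, hxu⟩
    exact ⟨u, hu, wrel_trans hb hab hbu, hxu⟩

lemma splice {G : SignedHypergraph V E} {f : V → ℝ} {x : V} {ℓ₁ ℓ₂ : ℕ} {v₁ v₂ : ℕ → V}
    {e₁ e₂ : ℕ → E} (hx : f x = 0)
    (hp₁ : NPath G f ℓ₁ v₁ e₁) (hp₂ : NPath G f ℓ₂ v₂ e₂) (hx₁ : v₁ 0 = x) (hx₂ : v₂ 0 = x)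
    {k₁ k₂ : ℕ} (hk₁ : k₁ ≤ ℓ₁) (hk₂ : k₂ ≤ ℓ₂)
    (hne₁ : f (v₁ k₁) ≠ 0) (hne₂ : f (v₂ k₂) ≠ 0)
    (hmin₁ : ∀ m, m < k₁ → f (v₁ m) = 0) (hmin₂ : ∀ m, m < k₂ → f (v₂ m) = 0)
    (ha : 0 < (f (v₁ k₁) * ∏ t ∈ Finset.Ico 0 k₁, G.edgeSign (e₁ t)) *
        (f (v₂ k₂) * ∏ t ∈ Finset.Ico 0 k₂, G.edgeSign (e₂ t))) :
    G.wRel f (v₁ ℓ₁) (v₂ ℓ₂) := by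
  have hk₁pos : 1 ≤ k₁ := by
    by_contra h
    exact hne₁ (by rw [show k₁ = 0 from by omega, hx₁]; exact hx)
  have hk₂pos : 1 ≤ k₂ := by
    by_contra h
    exact hne₂ (by rw [show k₂ = 0 from by omega, hx₂]; exact hx)
  have hℓ₁pos : 1 ≤ ℓ₁ := le_trans hk₁pos hk₁
  obtain ⟨rv, hrv⟩ : ∃ rv : ℕ → V, ∀ n, rv n = v₁ (ℓ₁ - n) := ⟨_, fun _ => rfl⟩
  obtain ⟨re, hre⟩ : ∃ re : ℕ → E, ∀ n, re n = e₁ (ℓ₁ - 1 - n) := ⟨_, fun _ => rfl⟩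
  have hrp : NPath G f ℓ₁ rv re := by
    have := npath_reverse hp₁
    constructor
    · intro t ht
      rw [hrv, hrv, hre]
      rw [show ℓ₁ - (t + 1) = ℓ₁ - t - 1 from by omega]
      exact this.1 t ht
    · intro i j hij hjl hfi hfj hz
      rw [hrv] at hfi hfj
      have hzz : ∀ k, i < k → k < j → f (v₁ (ℓ₁ - k)) = 0 := fun k h1 h2 => by
        have := hz k h1 h2
        rwa [hrv] at this
      have key := this.2 i j hij hjl hfi hfj hzz
      have hp : ∏ t ∈ Finset.Ico i j, G.edgeSign (re t)
          = ∏ t ∈ Finset.Ico i j, G.edgeSign ((fun n => e₁ (ℓ₁ - 1 - n)) t) :=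
        Finset.prod_congr rfl fun t _ => by rw [hre]
      rw [hrv, hrv, hp]
      exact key
  have hjct : rv ℓ₁ = v₂ 0 := by rw [hrv, Nat.sub_self, hx₁, hx₂]
  have hs : ∀ i j, i ≤ ℓ₁ → j ≤ ℓ₂ → f (rv i) ≠ 0 → f (v₂ j) ≠ 0 →
      (∀ k, i < k → k ≤ ℓ₁ → f (rv k) = 0) → (∀ k, k < j → f (v₂ k) = 0) →
      0 < f (rv i) * ((∏ t ∈ Finset.Ico i ℓ₁, G.edgeSign (re t)) *
          ∏ t ∈ Finset.Ico 0 j, G.edgeSign (e₂ t)) * f (v₂ j) := by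
    intro i j hi hj hfi hfj htrail hlead
    rw [hrv] at hfi
    have hieq : ℓ₁ - i = k₁ := by
      have h1 : k₁ ≤ ℓ₁ - i := by
        by_contra h
        exact hfi (hmin₁ (ℓ₁ - i) (by omega))
      have h2 : ℓ₁ - i ≤ k₁ := by
        by_contra h
        refine hne₁ ?_
        have := htrail (ℓ₁ - k₁) (by omega) (by omega)
        rw [hrv, show ℓ₁ - (ℓ₁ - k₁) = k₁ from by omega] at this
        exact this
      omega
    have hjeq : j = k₂ := by
      have h1 : k₂ ≤ j := by
        by_contra h
        exact hfj (hmin₂ j (by omega))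
      have h2 : j ≤ k₂ := by
        by_contra h
        exact hne₂ (hlead k₂ (by omega))
      omega
    have hieq' : i = ℓ₁ - k₁ := by omega
    subst hjeq hieq'
    have hprod : ∏ t ∈ Finset.Ico (ℓ₁ - k₁) ℓ₁, G.edgeSign (re t)
        = ∏ t ∈ Finset.Ico 0 k₁, G.edgeSign (e₁ t) := by
      have s1 : ∏ t ∈ Finset.Ico (ℓ₁ - k₁) ℓ₁, G.edgeSign (re t)
          = ∏ t ∈ Finset.Ico (ℓ₁ - k₁) ℓ₁, (fun m => G.edgeSign (e₁ m)) (ℓ₁ - 1 - t) :=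
        Finset.prod_congr rfl fun t _ => by rw [hre]
      rw [s1]
      have h5 := Finset.prod_Ico_reflect (fun m => G.edgeSign (e₁ m)) (ℓ₁ - k₁)
        (m := ℓ₁) (n := ℓ₁ - 1) (by omega)
      rw [show ℓ₁ - 1 + 1 = ℓ₁ from by omega] at h5
      rw [h5, Nat.sub_self, show ℓ₁ - (ℓ₁ - k₁) = k₁ from by omega]
    rw [hrv, hprod, hieq]
    nlinarith [ha]
  obtain ⟨vb, eb, hpb, hb0, hbl⟩ := npath_concat hrp hp₂ hjct hs
  have := wRel_of_npath hpb
  rw [hb0, hbl, hrv, Nat.sub_zero] at this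
  exact this

lemma three_reals {a b c : ℝ} (ha : a ≠ 0) (hb : b ≠ 0) (hc : c ≠ 0) :
    0 < a * b ∨ 0 < a * c ∨ 0 < b * c := by
  rcases ha.lt_or_gt with h | h <;> rcases hb.lt_or_gt with h' | h' <;>
    rcases hc.lt_or_gt with h'' | h''
  · exact Or.inl (by nlinarith)
  · exact Or.inl (by nlinarith)
  · exact Or.inr (Or.inl (by nlinarith))
  · exact Or.inr (Or.inr (by nlinarith))
  · exact Or.inr (Or.inr (by nlinarith))
  · exact Or.inr (Or.inl (by nlinarith))
  · exact Or.inl (by nlinarith)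
  · exact Or.inl (by nlinarith)


lemma least_nonzero {f : V → ℝ} {v : ℕ → V} {ℓ : ℕ} (h : f (v ℓ) ≠ 0) :
    ∃ k, k ≤ ℓ ∧ f (v k) ≠ 0 ∧ ∀ m, m < k → f (v m) = 0 := by
  have H : ∃ k, f (v k) ≠ 0 := ⟨ℓ, h⟩
  exact ⟨Nat.find H, Nat.find_min' H h, Nat.find_spec H,
    fun m hm => not_not.mp (Nat.find_min H hm)⟩

lemma domain_eq_of_wrel {G : SignedHypergraph V E} {f : V → ℝ} {w w' y y' : V}
    (hw : f w ≠ 0) (hw' : f w' ≠ 0) (hy : f y ≠ 0) (hy' : f y' ≠ 0)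
    (hwy : G.wRel f w y) (hw'y' : G.wRel f w' y') (hyy' : G.wRel f y y') :
    G.weakDomain f w = G.weakDomain f w' := by
  rw [weakDomain_eq hw hy hwy, weakDomain_eq hw' hy' hw'y']
  exact weakDomain_eq hy hy' hyy'

end SignedHypergraph

variable {V E : Type} [Fintype V] [Fintype E] [DecidableEq V] [DecidableEq E]

theorem stmt3 (G : SignedHypergraph V E) (f : V → ℝ) (hf : f ≠ 0) (D₁ D₂ D₃ : Set V)
    (h₁ : G.IsWeakNodalDomain f D₁) (h₂ : G.IsWeakNodalDomain f D₂)
    (h₃ : G.IsWeakNodalDomain f D₃) (h₁₂ : D₁ ≠ D₂) (h₁₃ : D₁ ≠ D₃) (h₂₃ : D₂ ≠ D₃) :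
    D₁ ∩ D₂ ∩ D₃ = ∅ := by
  obtain ⟨w₁, hw₁, rfl⟩ := h₁
  obtain ⟨w₂, hw₂, rfl⟩ := h₂
  obtain ⟨w₃, hw₃, rfl⟩ := h₃
  rw [Set.eq_empty_iff_forall_notMem]
  rintro x ⟨⟨hx1, hx2⟩, hx3⟩
  obtain ⟨y₁, hy₁, hwy₁, hxy₁⟩ := hx1
  obtain ⟨y₂, hy₂, hwy₂, hxy₂⟩ := hx2
  obtain ⟨y₃, hy₃, hwy₃, hxy₃⟩ := hx3
  by_cases hx : f x = 0
  · -- x is a zero of f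
    have hxne : ∀ y : V, f y ≠ 0 → x ≠ y := fun y hy h => hy (h ▸ hx)
    obtain ⟨ℓ₁, v₁, e₁, hl₁, hp₁, hv0₁, hvl₁⟩ := SignedHypergraph.npath_of_wRel hxy₁ (hxne y₁ hy₁)
    obtain ⟨ℓ₂, v₂, e₂, hl₂, hp₂, hv0₂, hvl₂⟩ := SignedHypergraph.npath_of_wRel hxy₂ (hxne y₂ hy₂)
    obtain ⟨ℓ₃, v₃, e₃, hl₃, hp₃, hv0₃, hvl₃⟩ := SignedHypergraph.npath_of_wRel hxy₃ (hxne y₃ hy₃)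
    obtain ⟨k₁, hk₁, hne₁, hmin₁⟩ := SignedHypergraph.least_nonzero (f := f) (v := v₁)
      (by rw [hvl₁]; exact hy₁)
    obtain ⟨k₂, hk₂, hne₂, hmin₂⟩ := SignedHypergraph.least_nonzero (f := f) (v := v₂)
      (by rw [hvl₂]; exact hy₂)
    obtain ⟨k₃, hk₃, hne₃, hmin₃⟩ := SignedHypergraph.least_nonzero (f := f) (v := v₃)
      (by rw [hvl₃]; exact hy₃)
    have ha₁ : f (v₁ k₁) * (∏ t ∈ Finset.Ico 0 k₁, G.edgeSign (e₁ t)) ≠ 0 :=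
      mul_ne_zero hne₁ (Finset.prod_ne_zero_iff.mpr fun t _ => G.edgeSign_ne_zero _)
    have ha₂ : f (v₂ k₂) * (∏ t ∈ Finset.Ico 0 k₂, G.edgeSign (e₂ t)) ≠ 0 :=
      mul_ne_zero hne₂ (Finset.prod_ne_zero_iff.mpr fun t _ => G.edgeSign_ne_zero _)
    have ha₃ : f (v₃ k₃) * (∏ t ∈ Finset.Ico 0 k₃, G.edgeSign (e₃ t)) ≠ 0 :=
      mul_ne_zero hne₃ (Finset.prod_ne_zero_iff.mpr fun t _ => G.edgeSign_ne_zero _)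
    rcases SignedHypergraph.three_reals ha₁ ha₂ ha₃ with hpos | hpos | hpos
    · have hrel := SignedHypergraph.splice hx hp₁ hp₂ hv0₁ hv0₂ hk₁ hk₂ hne₁ hne₂ hmin₁ hmin₂ hpos
      rw [hvl₁, hvl₂] at hrel
      exact h₁₂ (SignedHypergraph.domain_eq_of_wrel hw₁ hw₂ hy₁ hy₂ hwy₁ hwy₂ hrel)
    · have hrel := SignedHypergraph.splice hx hp₁ hp₃ hv0₁ hv0₃ hk₁ hk₃ hne₁ hne₃ hmin₁ hmin₃ hpos
      rw [hvl₁, hvl₃] at hrel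
      exact h₁₃ (SignedHypergraph.domain_eq_of_wrel hw₁ hw₃ hy₁ hy₃ hwy₁ hwy₃ hrel)
    · have hrel := SignedHypergraph.splice hx hp₂ hp₃ hv0₂ hv0₃ hk₂ hk₃ hne₂ hne₃ hmin₂ hmin₃ hpos
      rw [hvl₂, hvl₃] at hrel
      exact h₂₃ (SignedHypergraph.domain_eq_of_wrel hw₂ hw₃ hy₂ hy₃ hwy₂ hwy₃ hrel)
  · -- x is in the support of f
    have hrel : G.wRel f y₁ y₂ :=
      SignedHypergraph.wrel_trans hx (SignedHypergraph.wrel_symm hxy₁) hxy₂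
    exact h₁₂ (SignedHypergraph.domain_eq_of_wrel hw₁ hw₂ hy₁ hy₂ hwy₁ hwy₂ hrel)
end
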